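/- arXiv:1205.2879 — 3 statements merged into one kernel-verified Lean document; each statement's English description precedes it below -/
import Mathlib

section
/- Let F : Ordinal → Ordinal be any function, let α be an ordinal with 0 < α < ε(Ω), and let ξ be any ordinal. Then the set of ordinals γ such that ω^γ = γ, K_Ω α ∪ {ξ} < γ, and for every η < γ and every β < α with K_Ω β < γ one has F^β(η) < γ, is nonempty; consequently γ₀ := F^α(ξ) itself satisfies ω^{γ₀} = γ₀, K_Ω α ∪ {ξ} < γ₀, and for every η < γ₀ and every β < α with K_Ω β < γ₀, F^β(η) < γ₀. -/
open Ordinal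

/-- The least ordinal `λ` with `Ω ^ λ = λ`. -/
noncomputable def epsOmega (Ω : Ordinal) : Ordinal := sInf {x : Ordinal | Ω ^ x = x}

/-- The set `K_Ω α` of coefficients of `α`, defined by recursion on `α` via the
base-`Ω` Cantor normal form: `K_Ω α = {β₁,…,β_l} ∪ K_Ω α₁ ∪ ⋯ ∪ K_Ω α_l`. -/
noncomputable def KOmega (Ω : Ordinal) : Ordinal → Set Ordinal :=
  WellFounded.fix Ordinal.lt_wf fun α IH =>
    {β | ∃ p ∈ Ordinal.CNF Ω α, p.2 = β} ∪
    {β | ∃ p ∈ Ordinal.CNF Ω α, ∃ h : p.1 < α, β ∈ IH p.1 h}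

/-- The hierarchy `F^α`: `F^0 ξ = F ξ`, and for `α > 0`, `F^α ξ` is the least `γ` with
`ω^γ = γ`, `K_Ω α ∪ {ξ} < γ`, and `F^β η < γ` for all `η < γ` and `β < α` with `K_Ω β < γ`. -/
noncomputable def Hier (Ω : Ordinal) (F : Ordinal → Ordinal) : Ordinal → Ordinal → Ordinal :=
  WellFounded.fix Ordinal.lt_wf fun α IH =>
    if _ : α = 0 then F
    else fun ξ => sInf {γ : Ordinal | omega0 ^ γ = γ ∧ (∀ x ∈ KOmega Ω α, x < γ) ∧ ξ < γ ∧
      ∀ η < γ, ∀ β, ∀ hβ : β < α, (∀ x ∈ KOmega Ω β, x < γ) → IH β hβ η < γ}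

lemma KOmega_eq (Ω α : Ordinal) : KOmega Ω α =
    {β | ∃ p ∈ Ordinal.CNF Ω α, p.2 = β} ∪
    {β | ∃ p ∈ Ordinal.CNF Ω α, ∃ _ : p.1 < α, β ∈ KOmega Ω p.1} := by
  unfold KOmega
  rw [WellFounded.fix_eq]

lemma KOmega_lt (Ω : Ordinal) (hΩ : 1 < Ω) : ∀ α, ∀ x ∈ KOmega Ω α, x < Ω := by
  intro α
  induction α using Ordinal.induction with
  | _ α IH =>
    intro x hx
    rw [KOmega_eq] at hx
    rcases hx with ⟨p, hp, rfl⟩ | ⟨p, hp, h1, h2⟩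
    · exact Ordinal.CNF.snd_lt hΩ hp
    · exact IH p.1 h1 x h2

lemma Hier_eq (Ω : Ordinal) (F : Ordinal → Ordinal) {α : Ordinal} (h : α ≠ 0) (ξ : Ordinal) :
    Hier Ω F α ξ = sInf {γ : Ordinal | omega0 ^ γ = γ ∧ (∀ x ∈ KOmega Ω α, x < γ) ∧ ξ < γ ∧
      ∀ η < γ, ∀ β, β < α → (∀ x ∈ KOmega Ω β, x < γ) → Hier Ω F β η < γ} := by
  unfold Hier
  rw [WellFounded.fix_eq, dif_neg h]

universe u

noncomputable def seqH (Ω : Ordinal.{u}) (F : Ordinal → Ordinal) (α ξ : Ordinal) : ℕ → Ordinal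
  | 0 => (Ω ⊔ ξ) + 1
  | n + 1 => (omega0 ^ seqH Ω F α ξ n) ⊔
      (Ordinal.blsub.{u,u} α fun β _ => Ordinal.blsub.{u,u} (seqH Ω F α ξ n) fun η _ => Hier Ω F β η) ⊔
      (seqH Ω F α ξ n + 1)

lemma seqH_lt_succ (Ω : Ordinal.{u}) (F : Ordinal → Ordinal) (α ξ : Ordinal) (n : ℕ) :
    seqH Ω F α ξ n < seqH Ω F α ξ (n + 1) :=
  lt_of_lt_of_le (Order.lt_succ _) (le_sup_right.trans_eq rfl)

lemma nonempty_aux (Ω : Ordinal.{u}) (hΩ : 1 < Ω) (F : Ordinal.{u} → Ordinal.{u})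
    (α : Ordinal.{u}) (ξ : Ordinal.{u}) :
    {γ : Ordinal | omega0 ^ γ = γ ∧ (∀ x ∈ KOmega Ω α, x < γ) ∧ ξ < γ ∧
        ∀ η < γ, ∀ β < α, (∀ x ∈ KOmega Ω β, x < γ) → Hier Ω F β η < γ}.Nonempty := by
    set s : ℕ → Ordinal := seqH Ω F α ξ with hs
    set γ := ⨆ n, s n with hγ
    have hle : ∀ n, s n ≤ γ := Ordinal.le_iSup s
    have hstep : ∀ n, s n < s (n + 1) := seqH_lt_succ Ω F α ξ
    have hlt : ∀ {a}, a < γ → ∃ n, a < s n := fun {a} ha => Ordinal.lt_iSup_iff.1 ha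
    have hlim : Order.IsSuccLimit γ := by
      rw [Ordinal.isSuccLimit_iff, Order.isSuccPrelimit_iff_succ_lt]
      constructor
      · intro h0
        exact absurd ((hle 0).trans_eq h0) (by simp [hs, seqH])
      · intro a ha
        obtain ⟨n, hn⟩ := hlt ha
        exact lt_of_le_of_lt (Order.succ_le_of_lt hn) ((hstep n).trans_le (hle (n + 1)))
    have homega : omega0 ^ γ = γ := by
      apply le_antisymm
      · rw [Ordinal.opow_le_of_isSuccLimit omega0_ne_zero hlim]
        intro b hb
        obtain ⟨n, hn⟩ := hlt hb
        refine le_trans (Ordinal.opow_le_opow_right omega0_pos hn.le) ?_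
        exact le_trans (le_sup_left.trans le_sup_left) (hle (n + 1))
      · exact Ordinal.right_le_opow γ one_lt_omega0
    have hΩγ : Ω < γ := lt_of_lt_of_le
      (lt_of_le_of_lt le_sup_left (Order.lt_succ _)) (hle 0)
    refine ⟨γ, homega, ?_, ?_, ?_⟩
    · exact fun x hx => (KOmega_lt Ω hΩ α x hx).trans hΩγ
    · exact lt_of_lt_of_le (lt_of_le_of_lt le_sup_right (Order.lt_succ _)) (hle 0)
    · intro η hη β hβ _
      obtain ⟨n, hn⟩ := hlt hη
      have h1 : Hier Ω F β η < Ordinal.blsub.{u,u} (s n) fun η _ => Hier Ω F β η :=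
        Ordinal.lt_blsub _ η hn
      have h2 : (Ordinal.blsub.{u,u} (s n) fun η _ => Hier Ω F β η) <
          Ordinal.blsub.{u,u} α fun β _ => Ordinal.blsub.{u,u} (s n) fun η _ => Hier Ω F β η :=
        Ordinal.lt_blsub _ β hβ
      refine lt_of_lt_of_le (h1.trans h2) ?_
      exact le_trans (le_sup_right.trans le_sup_left) (hle (n + 1))

/-- For any F, 0 < α < ε(Ω) and any ξ, the set defining F^α(ξ) is nonempty, and
consequently γ₀ := F^α(ξ) itself satisfies the defining closure properties. -/
theorem stmt0 (Ω : Ordinal) (hΩ : 1 < Ω) (F : Ordinal → Ordinal) (α : Ordinal)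
    (hα0 : 0 < α) (hα : α < epsOmega Ω) (ξ : Ordinal) :
    {γ : Ordinal | omega0 ^ γ = γ ∧ (∀ x ∈ KOmega Ω α, x < γ) ∧ ξ < γ ∧
        ∀ η < γ, ∀ β < α, (∀ x ∈ KOmega Ω β, x < γ) → Hier Ω F β η < γ}.Nonempty ∧
    (omega0 ^ Hier Ω F α ξ = Hier Ω F α ξ ∧
      (∀ x ∈ KOmega Ω α, x < Hier Ω F α ξ) ∧ ξ < Hier Ω F α ξ ∧
      ∀ η < Hier Ω F α ξ, ∀ β < α, (∀ x ∈ KOmega Ω β, x < Hier Ω F α ξ) →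
        Hier Ω F β η < Hier Ω F α ξ) := by
  have hne := nonempty_aux Ω hΩ F α ξ
  refine ⟨hne, ?_⟩
  rw [Hier_eq Ω F hα0.ne' ξ]
  exact csInf_mem hne
end

section
/- Let F : Ordinal → Ordinal be any function with F(ζ) < Ω for all ζ < Ω, let α be an ordinal with 0 < α < ε(Ω), and let η, ξ < Ω. If η < F^α(ξ), then F^α(η) ≤ F^α(ξ). -/
open Ordinal

theorem Hier_def (Ω : Ordinal) (F : Ordinal → Ordinal) (α : Ordinal) :
    Hier Ω F α =
      if _ : α = 0 then F
      else fun ξ => sInf {γ : Ordinal | omega0 ^ γ = γ ∧ (∀ x ∈ KOmega Ω α, x < γ) ∧ ξ < γ ∧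
        ∀ η < γ, ∀ β, ∀ _ : β < α, (∀ x ∈ KOmega Ω β, x < γ) → Hier Ω F β η < γ} := by
  rw [Hier, WellFounded.fix_eq]

/-- If F maps Ω into Ω, 0 < α < ε(Ω), η, ξ < Ω and η < F^α(ξ), then F^α(η) ≤ F^α(ξ). -/
theorem stmt2 (Ω : Ordinal) (hΩ : 1 < Ω) (F : Ordinal → Ordinal)
    (hF : ∀ ζ < Ω, F ζ < Ω) (α : Ordinal) (hα0 : 0 < α) (hα : α < epsOmega Ω)
    (η ξ : Ordinal) (hη : η < Ω) (hξ : ξ < Ω)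
    (h : η < Hier Ω F α ξ) :
    Hier Ω F α η ≤ Hier Ω F α ξ := by
  have hne : α ≠ 0 := hα0.ne'
  rw [Hier_def, dif_neg hne] at h ⊢
  rcases ({γ : Ordinal | omega0 ^ γ = γ ∧ (∀ x ∈ KOmega Ω α, x < γ) ∧ ξ < γ ∧
      ∀ η < γ, ∀ β, ∀ _ : β < α, (∀ x ∈ KOmega Ω β, x < γ) →
        Hier Ω F β η < γ}).eq_empty_or_nonempty with he | hne'
  · rw [he, Ordinal.sInf_empty] at h
    exact absurd h (by simp)
  · have hmem := csInf_mem hne'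
    obtain ⟨h1, h2, _, h4⟩ := hmem
    exact csInf_le (OrderBot.bddBelow _) ⟨h1, h2, h, h4⟩
end

section
/- Let α, β be ordinals < ε(Ω) and let ξ be a nonzero additively indecomposable ordinal, i.e. ξ is closed under ordinal addition (the paper assumes the stronger hypothesis that ξ is strongly critical). If K_Ω α < ξ and K_Ω β < ξ, then K_Ω (α + β) < ξ. -/
open Ordinal

namespace S7

/-- bound predicate -/
def KB (Ω ξ δ : Ordinal) : Prop := ∀ x ∈ KOmega Ω δ, x < ξ

theorem KOmega_eq (Ω α : Ordinal) : KOmega Ω α =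
    {β | ∃ p ∈ Ordinal.CNF Ω α, p.2 = β} ∪
    {β | ∃ p ∈ Ordinal.CNF Ω α, ∃ h : p.1 < α, β ∈ KOmega Ω p.1} :=
  WellFounded.fix_eq _ _ _

theorem KOmega_zero (Ω : Ordinal) : KOmega Ω 0 = ∅ := by
  rw [KOmega_eq]
  simp

theorem KB_zero (Ω ξ : Ordinal) : KB Ω ξ 0 := by
  intro x hx
  rw [KOmega_zero] at hx
  exact absurd hx (Set.notMem_empty x)

section eps

variable {Ω : Ordinal}

theorem eps_fixed (hΩ : 1 < Ω) : Ω ^ epsOmega Ω = epsOmega Ω := by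
  have h : nfp (Ω ^ ·) 0 ∈ {x : Ordinal | Ω ^ x = x} := Ordinal.nfp_fp (isNormal_opow hΩ) 0
  exact csInf_mem ⟨_, h⟩

theorem eps_not_fixed (hΩ : 1 < Ω) {x : Ordinal} (hx : x < epsOmega Ω) : Ω ^ x ≠ x :=
  fun h => hx.not_ge (csInf_le' h)

theorem lt_opow_self_of_lt_eps (hΩ : 1 < Ω) {x : Ordinal} (hx : x < epsOmega Ω) : x < Ω ^ x :=
  (right_le_opow x hΩ).lt_of_ne fun h => eps_not_fixed hΩ hx h.symm

theorem eps_pos (hΩ : 1 < Ω) : 0 < epsOmega Ω := by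
  rcases (zero_le : (0:Ordinal) ≤ epsOmega Ω) |>.lt_or_eq with h | h
  · exact h
  · exfalso
    have := eps_fixed hΩ
    rw [← h, opow_zero] at this
    exact one_ne_zero this

theorem one_lt_eps (hΩ : 1 < Ω) : 1 < epsOmega Ω := by
  rcases lt_or_ge 1 (epsOmega Ω) with h | h
  · exact h
  · exfalso
    have h1 : epsOmega Ω = 1 := by
      have h0 : (1 : Ordinal) ≤ epsOmega Ω := by
        have := Order.add_one_le_iff.mpr (eps_pos hΩ)
        rwa [zero_add] at this
      exact le_antisymm h h0
    have := eps_fixed hΩ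
    rw [h1, opow_one] at this
    exact hΩ.ne' this

theorem eps_isLimit (hΩ : 1 < Ω) : Order.IsSuccLimit (epsOmega Ω) := by
  rcases zero_or_succ_or_isSuccLimit (epsOmega Ω) with h | ⟨σ, hσ⟩ | h
  · exact absurd h (eps_pos hΩ).ne'
  · exfalso
    replace hσ := hσ.symm
    have hσlt : σ < epsOmega Ω := hσ ▸ Order.lt_succ σ
    have h1 : Order.succ σ ≤ Ω ^ σ := Order.succ_le_iff.mpr (lt_opow_self_of_lt_eps hΩ hσlt)
    have h2 : Ω ^ epsOmega Ω = Ω ^ σ * Ω := by rw [hσ, opow_succ]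
    have h3 : epsOmega Ω * 2 ≤ Ω ^ σ * Ω := by
      calc epsOmega Ω * 2 ≤ Ω ^ σ * 2 := by
            refine mul_le_mul_left ?_ 2
            rw [hσ]; exact h1
        _ ≤ Ω ^ σ * Ω := by
            refine mul_le_mul_right ?_ _
            have := Order.add_one_le_iff.mpr hΩ
            calc (2:Ordinal) = 1 + 1 := by norm_num
              _ ≤ Ω := this
    have h4 : epsOmega Ω * 2 ≤ epsOmega Ω := by
      calc epsOmega Ω * 2 ≤ Ω ^ σ * Ω := h3
        _ = Ω ^ epsOmega Ω := h2.symm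
        _ = epsOmega Ω := eps_fixed hΩ
    have h5 : epsOmega Ω + epsOmega Ω ≤ epsOmega Ω := by
      have h6 : epsOmega Ω * 2 = epsOmega Ω + epsOmega Ω := by
        have h2' : (2 : Ordinal) = 1 + 1 := by norm_num
        rw [h2', mul_add, mul_one]
      rwa [h6] at h4
    exact absurd h5 (not_le.mpr (lt_add_of_pos_right _ (eps_pos hΩ)))
  · exact h

theorem eps_add_closed (hΩ : 1 < Ω) {a b : Ordinal} (ha : a < epsOmega Ω)
    (hb : b < epsOmega Ω) : a + b < epsOmega Ω := by
  have haM : a ≤ max a b := le_max_left a b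
  have hbM : b ≤ max a b := le_max_right a b
  have hMeps : max a b < epsOmega Ω := max_lt ha hb
  set l := log Ω (max a b) with hl
  have hMl : max a b < Ω ^ Order.succ l := lt_opow_succ_log_self hΩ (max a b)
  have h1 : a + b < Ω ^ Order.succ l + Ω ^ Order.succ l := by
    calc a + b < a + Ω ^ Order.succ l := add_lt_add_right (lt_of_le_of_lt hbM hMl) a
      _ ≤ Ω ^ Order.succ l + Ω ^ Order.succ l :=
          add_le_add_left (le_of_lt (lt_of_le_of_lt haM hMl)) _
  have h2 : Ω ^ Order.succ l + Ω ^ Order.succ l = Ω ^ Order.succ l * 2 := by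
    have h2' : (2 : Ordinal) = 1 + 1 := by norm_num
    rw [h2', mul_add, mul_one]
  have h2Ω : (2:Ordinal) ≤ Ω := by
    have := Order.add_one_le_iff.mpr hΩ
    calc (2:Ordinal) = 1 + 1 := by norm_num
      _ ≤ Ω := this
  have h3 : Ω ^ Order.succ l * 2 ≤ Ω ^ Order.succ (Order.succ l) := by
    calc Ω ^ Order.succ l * 2 ≤ Ω ^ Order.succ l * Ω := mul_le_mul_right h2Ω _
      _ = Ω ^ Order.succ (Order.succ l) := (opow_succ Ω _).symm
  have hleps : l < epsOmega Ω := lt_of_le_of_lt (log_le_self Ω (max a b)) hMeps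
  have h5 : Order.succ (Order.succ l) < epsOmega Ω :=
    (eps_isLimit hΩ).succ_lt ((eps_isLimit hΩ).succ_lt hleps)
  have h4 : Ω ^ Order.succ (Order.succ l) ≤ epsOmega Ω := by
    calc Ω ^ Order.succ (Order.succ l) ≤ Ω ^ epsOmega Ω :=
          opow_le_opow_right (lt_trans zero_lt_one hΩ) h5.le
      _ = epsOmega Ω := eps_fixed hΩ
  exact lt_of_lt_of_le (lt_of_lt_of_le h1 (h2 ▸ h3)) h4

theorem log_lt_self_of_lt_eps (hΩ : 1 < Ω) {γ : Ordinal} (hγ0 : γ ≠ 0)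
    (hγ : γ < epsOmega Ω) : log Ω γ < γ := by
  refine (log_le_self Ω γ).lt_of_ne fun h => ?_
  have h1 : Ω ^ γ ≤ γ := by
    conv_lhs => rw [← h]
    exact opow_log_le_self Ω hγ0
  exact absurd (le_antisymm h1 (right_le_opow γ hΩ)) (eps_not_fixed hΩ hγ)

end eps

section struct

variable {Ω : Ordinal}

theorem mem_KOmega_iff (hΩ : 1 < Ω) {γ : Ordinal} (hγ0 : γ ≠ 0) (hγ : γ < epsOmega Ω)
    {x : Ordinal} :
    x ∈ KOmega Ω γ ↔ (x = γ / Ω ^ log Ω γ ∨ x ∈ KOmega Ω (log Ω γ) ∨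
      x ∈ KOmega Ω (γ % Ω ^ log Ω γ)) := by
  have hcnf := Ordinal.CNF.ne_zero (b := Ω) hγ0
  have hloglt : log Ω γ < γ := log_lt_self_of_lt_eps hΩ hγ0 hγ
  have hRlt : γ % Ω ^ log Ω γ < γ := mod_opow_log_lt_self Ω hγ0
  constructor
  · intro hx
    rw [KOmega_eq] at hx
    rcases hx with ⟨p, hp, hp2⟩ | ⟨p, hp, h1, hx⟩
    · rw [hcnf, List.mem_cons] at hp
      rcases hp with rfl | hp
      · exact Or.inl hp2.symm
      · refine Or.inr (Or.inr ?_)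
        rw [KOmega_eq]
        exact Or.inl ⟨p, hp, hp2⟩
    · rw [hcnf, List.mem_cons] at hp
      rcases hp with rfl | hp
      · exact Or.inr (Or.inl hx)
      · refine Or.inr (Or.inr ?_)
        rw [KOmega_eq]
        right
        have hR0 : γ % Ω ^ log Ω γ ≠ 0 := by
          intro h0
          rw [h0] at hp
          simp [Ordinal.CNF.zero_right] at hp
        have hp1R : p.1 < γ % Ω ^ log Ω γ :=
          lt_of_le_of_lt (Ordinal.CNF.fst_le_log hp)
            (log_lt_self_of_lt_eps hΩ hR0 (lt_trans hRlt hγ))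
        exact ⟨p, hp, hp1R, hx⟩
  · intro hx
    rw [KOmega_eq]
    rcases hx with rfl | hx | hx
    · exact Or.inl ⟨(log Ω γ, γ / Ω ^ log Ω γ), by rw [hcnf]; exact List.mem_cons_self, rfl⟩
    · exact Or.inr ⟨(log Ω γ, γ / Ω ^ log Ω γ), by rw [hcnf]; exact List.mem_cons_self,
        hloglt, hx⟩
    · rw [KOmega_eq] at hx
      rcases hx with ⟨p, hp, hp2⟩ | ⟨p, hp, h1, hx⟩
      · exact Or.inl ⟨p, by rw [hcnf]; exact List.mem_cons_of_mem _ hp, hp2⟩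
      · exact Or.inr ⟨p, by rw [hcnf]; exact List.mem_cons_of_mem _ hp, lt_trans h1 hRlt, hx⟩

theorem KB_iff (hΩ : 1 < Ω) {ξ γ : Ordinal} (hγ0 : γ ≠ 0) (hγ : γ < epsOmega Ω) :
    KB Ω ξ γ ↔ (γ / Ω ^ log Ω γ < ξ ∧ KB Ω ξ (log Ω γ) ∧ KB Ω ξ (γ % Ω ^ log Ω γ)) := by
  constructor
  · intro h
    refine ⟨h _ ((mem_KOmega_iff hΩ hγ0 hγ).mpr (Or.inl rfl)), fun x hx => ?_, fun x hx => ?_⟩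
    · exact h _ ((mem_KOmega_iff hΩ hγ0 hγ).mpr (Or.inr (Or.inl hx)))
    · exact h _ ((mem_KOmega_iff hΩ hγ0 hγ).mpr (Or.inr (Or.inr hx)))
  · rintro ⟨h1, h2, h3⟩ x hx
    rcases (mem_KOmega_iff hΩ hγ0 hγ).mp hx with rfl | hx | hx
    · exact h1
    · exact h2 x hx
    · exact h3 x hx

/-- log, div, mod of `b ^ m * z + u`. -/
theorem logdiv {b m z u : Ordinal} (hb : 1 < b) (hz0 : 0 < z) (hzb : z < b)
    (hu : u < b ^ m) :
    log b (b ^ m * z + u) = m ∧ (b ^ m * z + u) / b ^ m = z ∧ (b ^ m * z + u) % b ^ m = u := by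
  have hbm0 : (b : Ordinal) ^ m ≠ 0 := (opow_pos m (lt_trans zero_lt_one hb)).ne'
  have hδlow : b ^ m ≤ b ^ m * z + u :=
    le_trans (le_mul_left _ hz0) (le_self_add)
  have hδ0 : b ^ m * z + u ≠ 0 :=
    (lt_of_lt_of_le (opow_pos m (lt_trans zero_lt_one hb)) hδlow).ne'
  have hδhigh : b ^ m * z + u < b ^ Order.succ m := by
    calc b ^ m * z + u < b ^ m * z + b ^ m := add_lt_add_right hu _
      _ = b ^ m * (z + 1) := by rw [mul_add, mul_one]
      _ ≤ b ^ m * b := by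
          refine mul_le_mul_right ?_ _
          rw [add_one_eq_succ]
          exact Order.succ_le_iff.mpr hzb
      _ = b ^ Order.succ m := (opow_succ b m).symm
  have hlog : log b (b ^ m * z + u) = m := by
    refine le_antisymm ?_ ?_
    · have := (lt_opow_iff_log_lt hb hδ0).mp hδhigh
      exact Order.lt_succ_iff.mp this
    · exact (opow_le_iff_le_log hb hδ0).mp hδlow
  refine ⟨hlog, ?_, ?_⟩
  · rw [Ordinal.mul_add_div _ hbm0]
    have : u / b ^ m = 0 := by
      have := (Ordinal.div_lt hbm0).mpr (by rwa [mul_one])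
      exact Ordinal.lt_one_iff_zero.mp this
    rw [this, add_zero]
  · rw [Ordinal.mul_add_mod_self, Ordinal.mod_eq_of_lt hu]

theorem KB_single (hΩ : 1 < Ω) {ξ m z u : Ordinal} (hz0 : 0 < z) (hzΩ : z < Ω)
    (hu : u < Ω ^ m) (heps : Ω ^ m * z + u < epsOmega Ω) (hzξ : z < ξ)
    (hm : KB Ω ξ m) (hu' : KB Ω ξ u) : KB Ω ξ (Ω ^ m * z + u) := by
  obtain ⟨hl, hd, hmod⟩ := logdiv hΩ hz0 hzΩ hu
  have hδ0 : Ω ^ m * z + u ≠ 0 := by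
    intro h
    have hδlow : Ω ^ m ≤ Ω ^ m * z + u := le_trans (le_mul_left _ hz0) (le_self_add)
    rw [h] at hδlow
    exact (opow_pos m (lt_trans zero_lt_one hΩ)).ne' (le_antisymm hδlow zero_le)
  rw [KB_iff hΩ hδ0 heps, hl, hd, hmod]
  exact ⟨hzξ, hm, hu'⟩

theorem KB_mod (hΩ : 1 < Ω) {ξ : Ordinal} :
    ∀ γ, γ < epsOmega Ω → KB Ω ξ γ → ∀ j : Ordinal, KB Ω ξ (γ % Ω ^ j) := by
  intro γ
  induction γ using Ordinal.induction with
  | _ γ IH =>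
    intro hγeps hKγ j
    rcases eq_or_ne γ 0 with rfl | hγ0
    · rw [Ordinal.zero_mod]
      exact KB_zero Ω ξ
    rcases lt_or_ge (log Ω γ) j with hj | hj
    · have : γ < Ω ^ j := (lt_opow_iff_log_lt hΩ hγ0).mpr hj
      rwa [Ordinal.mod_eq_of_lt this]
    · obtain ⟨hC, hKe, hKR⟩ := (KB_iff hΩ hγ0 hγeps).mp hKγ
      have hRlt : γ % Ω ^ log Ω γ < γ := mod_opow_log_lt_self Ω hγ0
      have hmodeq : γ % Ω ^ j = (γ % Ω ^ log Ω γ) % Ω ^ j := by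
        conv_lhs => rw [← Ordinal.div_add_mod γ (Ω ^ log Ω γ)]
        have hsplit : Ω ^ log Ω γ = Ω ^ j * Ω ^ (log Ω γ - j) := by
          rw [← opow_add, Ordinal.add_sub_cancel_of_le hj]
        rw [hsplit, mul_assoc, Ordinal.mul_add_mod_self]
      rw [hmodeq]
      exact IH _ hRlt (lt_trans hRlt hγeps) hKR j

theorem K_le (hΩ : 1 < Ω) : ∀ γ, γ < epsOmega Ω → ∀ x ∈ KOmega Ω γ, x ≤ γ := by
  intro γ
  induction γ using Ordinal.induction with
  | _ γ IH =>
    intro hγeps x hx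
    rcases eq_or_ne γ 0 with rfl | hγ0
    · rw [KOmega_zero] at hx
      exact absurd hx (Set.notMem_empty x)
    rcases (mem_KOmega_iff hΩ hγ0 hγeps).mp hx with rfl | hx | hx
    · calc γ / Ω ^ log Ω γ ≤ Ω ^ log Ω γ * (γ / Ω ^ log Ω γ) :=
            le_mul_right _ (opow_pos _ (lt_trans zero_lt_one hΩ))
        _ ≤ γ := Ordinal.mul_div_le γ _
    · have hloglt : log Ω γ < γ := log_lt_self_of_lt_eps hΩ hγ0 hγeps
      exact le_trans (IH _ hloglt (lt_trans hloglt hγeps) x hx) hloglt.le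
    · have hRlt : γ % Ω ^ log Ω γ < γ := mod_opow_log_lt_self Ω hγ0
      exact le_trans (IH _ hRlt (lt_trans hRlt hγeps) x hx) hRlt.le

end struct

section smallfacts

theorem nat_lt_xi {ξ : Ordinal} (hξ1 : 1 < ξ) (hadd : ∀ a < ξ, ∀ b < ξ, a + b < ξ) :
    ∀ n : ℕ, (n : Ordinal) < ξ := by
  intro n
  induction n with
  | zero => exact_mod_cast lt_trans zero_lt_one hξ1
  | succ n IH =>
    have := hadd _ IH _ hξ1
    simpa using this

theorem omega0_le_xi {ξ : Ordinal} (hξ1 : 1 < ξ) (hadd : ∀ a < ξ, ∀ b < ξ, a + b < ξ) :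
    ω ≤ ξ :=
  omega0_le.mpr fun n => (nat_lt_xi hξ1 hadd n).le

theorem mul_nat_lt_xi {ξ c : Ordinal} (hξ1 : 1 < ξ) (hadd : ∀ a < ξ, ∀ b < ξ, a + b < ξ)
    (hc : c < ξ) : ∀ n : ℕ, c * (n : Ordinal) < ξ := by
  intro n
  induction n with
  | zero => simpa using lt_trans zero_lt_one hξ1
  | succ n IH =>
    have h1 : c * ((n : Ordinal) + 1) = c * n + c := by rw [mul_add, mul_one]
    have h2 : ((n + 1 : ℕ) : Ordinal) = (n : Ordinal) + 1 := by push_cast; ring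
    rw [h2, h1]
    exact hadd _ IH _ hc

end smallfacts

section omegaFacts

theorem mul_omega0_eq {x : Ordinal} (hx : 0 < x) :
    x * ω = ω ^ Order.succ (log ω x) := by
  apply le_antisymm
  · rw [mul_le_iff_of_isSuccLimit isSuccLimit_omega0]
    intro b' hb'
    obtain ⟨n, rfl⟩ := lt_omega0.mp hb'
    have : ∀ n : ℕ, x * (n : Ordinal) < ω ^ Order.succ (log ω x) := by
      intro n
      induction n with
      | zero =>
        rw [Nat.cast_zero, mul_zero]
        exact opow_pos _ omega0_pos
      | succ n IH =>
        have h2 : ((n + 1 : ℕ) : Ordinal) = (n : Ordinal) + 1 := by push_cast; ring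
        rw [h2, mul_add, mul_one]
        exact principal_add_omega0_opow _ IH (lt_opow_succ_log_self one_lt_omega0 x)
    exact (this n).le
  · calc ω ^ Order.succ (log ω x) = ω ^ log ω x * ω := opow_succ ω _
      _ ≤ x * ω := mul_le_mul_left (opow_log_le_self ω hx.ne') ω

theorem mul_omega0_opow_eq {x a : Ordinal} (hx : 0 < x) (ha : 0 < a) :
    x * ω ^ a = ω ^ (log ω x + a) := by
  have h1 : a = 1 + (a - 1) := (Ordinal.add_sub_cancel_of_le (Order.add_one_le_iff.mpr ha
    |>.trans_eq' (zero_add (1:Ordinal)))).symm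
  rw [h1, opow_add, opow_one, ← mul_assoc, mul_omega0_eq hx, ← opow_add]
  congr 1
  rw [← add_one_eq_succ, add_assoc]

theorem mul_nat_decomp {F g h W : Ordinal} (hF : F = ω ^ g * h + W) (hW : W < ω ^ g)
    (hh : 0 < h) : ∀ n : ℕ, 0 < n → F * (n : Ordinal) = ω ^ g * (h * n) + W := by
  intro n
  induction n with
  | zero => intro h0; exact absurd h0 (lt_irrefl 0)
  | succ n IH =>
    intro _
    rcases Nat.eq_zero_or_pos n with rfl | hn
    · simp [hF]
    have hcast : ((n + 1 : ℕ) : Ordinal) = (n : Ordinal) + 1 := by push_cast; ring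
    have hgh : ω ^ g ≤ ω ^ g * h := le_mul_left _ hh
    calc F * ((n + 1 : ℕ) : Ordinal) = F * ((n : Ordinal) + 1) := by rw [hcast]
      _ = F * n + F := by rw [mul_add, mul_one]
      _ = ω ^ g * (h * n) + W + (ω ^ g * h + W) := by rw [IH hn, hF]
      _ = ω ^ g * (h * n) + (W + ω ^ g * h) + W := by rw [add_assoc, add_assoc, add_assoc]
      _ = ω ^ g * (h * n) + ω ^ g * h + W := by rw [add_absorp hW hgh]
      _ = ω ^ g * (h * n + h) + W := by rw [mul_add]
      _ = ω ^ g * (h * ((n + 1 : ℕ) : Ordinal)) + W := by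
          rw [hcast, mul_add h, mul_one, mul_add]

theorem tail_lt {Ω m Q u γ : Ordinal} (hΩ : 1 < Ω) (hQ : 0 < Q) (hu : u < Ω ^ m * 2)
    (hγ : γ = Ω ^ m * Q + u) : u < γ := by
  have hul : u ≤ γ := hγ ▸ le_add_self
  rcases hul.lt_or_eq with h | h
  · exact h
  exfalso
  have hX : Ω ^ m * Q + u = u := by rw [← hγ, h]
  have hX2 : Ω ^ m * Q + (Ω ^ m * Q + u) = u := by rw [hX, hX]
  have hgeq : Ω ^ m * Q + Ω ^ m * Q ≤ u := by
    calc Ω ^ m * Q + Ω ^ m * Q ≤ Ω ^ m * Q + (Ω ^ m * Q + u) := by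
          exact add_le_add_right (le_self_add) _
      _ = u := hX2
  have hbig : Ω ^ m * 2 ≤ Ω ^ m * Q + Ω ^ m * Q := by
    have h1 : Ω ^ m ≤ Ω ^ m * Q := le_mul_left _ hQ
    calc Ω ^ m * 2 = Ω ^ m + Ω ^ m := by
          rw [(by norm_num : (2:Ordinal) = 1 + 1), mul_add, mul_one]
      _ ≤ Ω ^ m * Q + Ω ^ m * Q := add_le_add h1 h1
  exact absurd (lt_of_lt_of_le hu (le_trans hbig hgeq)) (lt_irrefl u)

theorem neq_absorb {Ω x y : Ordinal} (hΩ : 1 < Ω) (hx : x ≠ 0) (hy : y < Ω ^ log Ω x) :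
    x % Ω ^ log Ω x + y ≠ x + y := by
  intro heq
  set b := Ω ^ log Ω x with hb
  have hb0 : b ≠ 0 := (opow_pos _ (lt_trans zero_lt_one hΩ)).ne'
  set c := x / b with hc
  have hc1 : 0 < c := by
    rw [hc, Ordinal.div_pos hb0]
    exact opow_log_le_self Ω hx
  set a := b * c with ha
  have hxsplit : x = a + x % b := (Ordinal.div_add_mod x b).symm
  have hkey : a + (x + y) = x + y := by
    have h0 : x + y = a + (x + y) := by
      calc x + y = a + x % b + y := by rw [← hxsplit]
        _ = a + (x % b + y) := by rw [add_assoc]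
        _ = a + (x + y) := by rw [heq]
    exact h0.symm
  have hkey3 : a + (a + (a + (x + y))) = x + y := by rw [hkey, hkey, hkey]
  have hgeq : a + (a + a) ≤ x + y := by
    calc a + (a + a) ≤ a + (a + (a + (x + y))) := by
          refine add_le_add_right (add_le_add_right (le_self_add) _) _
      _ = x + y := hkey3
  have hsmall : x + y < b * (c + 1) + b := by
    have h1 : x < b * (c + 1) := by
      have := Ordinal.lt_mul_succ_div x hb0
      rwa [← add_one_eq_succ] at this
    calc x + y < x + b := add_lt_add_right hy x
      _ ≤ b * (c + 1) + b := add_le_add_left h1.le b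
  have hbig : b * (c + 1) + b ≤ a + (a + a) := by
    have h1 : b ≤ a := le_mul_left _ hc1
    calc b * (c + 1) + b = a + (b + b) := by rw [mul_add, mul_one, ha, add_assoc]
      _ ≤ a + (a + a) := add_le_add_right (add_le_add h1 h1) a
  exact absurd (lt_of_lt_of_le hsmall (le_trans hbig hgeq)) (lt_irrefl _)

end omegaFacts

section lemA

theorem KB_one {Ω ξ : Ordinal} (hΩ : 1 < Ω) (hξ1 : 1 < ξ) : KB Ω ξ 1 := by
  intro x hx
  rcases (mem_KOmega_iff hΩ one_ne_zero (one_lt_eps hΩ)).mp hx with rfl | hx | hx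
  · have h1 : (1:Ordinal) / Ω ^ log Ω 1 = 1 := by
      rw [log_one_right, opow_zero, Ordinal.div_one]
    rw [h1]
    exact hξ1
  · rw [log_one_right] at hx
    rw [KOmega_zero] at hx
    exact absurd hx (Set.notMem_empty x)
  · rw [log_one_right, opow_zero, Ordinal.mod_one] at hx
    rw [KOmega_zero] at hx
    exact absurd hx (Set.notMem_empty x)

theorem LemA {Ω ξ γ₀ : Ordinal} (hΩ : 1 < Ω) (hξ1 : 1 < ξ)
    (hadd : ∀ a < ξ, ∀ b < ξ, a + b < ξ) (hγ₀ : γ₀ < epsOmega Ω)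
    (IHB : ∀ τ < γ₀, ∀ a b : Ordinal, a + b = τ → a < epsOmega Ω → b < epsOmega Ω →
      KB Ω ξ a → KB Ω ξ b → KB Ω ξ τ) :
    ∀ G : Ordinal, ∀ m u δ : Ordinal, δ = Ω ^ m * G + u → δ ≤ γ₀ → u < Ω ^ m → 0 < G →
      G < ξ → G < Ω * ω → m < epsOmega Ω → KB Ω ξ m → KB Ω ξ u → KB Ω ξ δ := by
  intro G
  induction G using Ordinal.induction with
  | _ G IHG =>
    intro m u δ hδ hδγ hu hG0 hGξ hGΩ hmeps hKm hKu
    have hΩ0 : (0:Ordinal) < Ω := lt_trans zero_lt_one hΩ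
    have hδeps : δ < epsOmega Ω := lt_of_le_of_lt hδγ hγ₀
    by_cases hPz : G / Ω = 0
    · have hGΩ' : G < Ω := by
        by_contra hge
        push_neg at hge
        have h0 : 0 < G / Ω := (Ordinal.div_pos hΩ0.ne').mpr hge
        rw [hPz] at h0
        exact lt_irrefl 0 h0
      rw [hδ]
      exact KB_single hΩ hG0 hGΩ' hu (hδ ▸ hδeps) hGξ hKm hKu
    · set P := G / Ω with hP
      set z := G % Ω with hz
      have hP0 : 0 < P := pos_iff_ne_zero.mpr hPz
      have hPω : P < ω := (Ordinal.div_lt hΩ0.ne').mpr hGΩ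
      have hΩG : Ω ≤ G := (Ordinal.div_pos hΩ0.ne').mp hP0
      have hPleG : P ≤ G := le_trans (le_mul_right P hΩ0) (Ordinal.mul_div_le G Ω)
      have hPG : P < G := by
        rcases lt_or_ge G ω with hGω | hωG
        · obtain ⟨n, hn⟩ := lt_omega0.mp hGω
          obtain ⟨k, hk⟩ := lt_omega0.mp (lt_of_le_of_lt hΩG hGω)
          have hn0 : 0 < n := by
            have h0 : (0:Ordinal) < (n:Ordinal) := hn ▸ hG0
            exact_mod_cast h0
          have hk1 : 1 < k := by
            have h0 : (1:Ordinal) < (k:Ordinal) := hk ▸ hΩ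
            exact_mod_cast h0
          have hPn : P = ((n / k : ℕ) : Ordinal) := by
            rw [hP, hn, hk, Ordinal.natCast_div]
          rw [hPn, hn]
          exact_mod_cast Nat.div_lt_self hn0 hk1
        · exact lt_of_lt_of_le hPω hωG
      have hzΩ : z < Ω := Ordinal.mod_lt G hΩ0.ne'
      have hzG : z ≤ G := Ordinal.mod_le G Ω
      have hGsplit : G = Ω * P + z := (Ordinal.div_add_mod G Ω).symm
      have hδ' : δ = Ω ^ (Order.succ m) * P + (Ω ^ m * z + u) := by
        rw [hδ, hGsplit, mul_add, ← mul_assoc, ← opow_succ, add_assoc]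
      have hu'lt : Ω ^ m * z + u < Ω ^ Order.succ m := by
        calc Ω ^ m * z + u < Ω ^ m * z + Ω ^ m := add_lt_add_right hu _
          _ = Ω ^ m * (z + 1) := by rw [mul_add, mul_one]
          _ ≤ Ω ^ m * Ω := by
              refine mul_le_mul_right ?_ _
              rw [add_one_eq_succ]
              exact Order.succ_le_iff.mpr hzΩ
          _ = Ω ^ Order.succ m := (opow_succ Ω m).symm
      have hu'eps : Ω ^ m * z + u < epsOmega Ω :=
        lt_of_le_of_lt (le_trans (le_add_self) (le_of_eq hδ'.symm)) hδeps
      have hKu' : KB Ω ξ (Ω ^ m * z + u) := by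
        rcases eq_or_ne z 0 with hz0 | hz0
        · rw [hz0, mul_zero, zero_add]
          exact hKu
        · exact KB_single hΩ (pos_iff_ne_zero.mpr hz0) hzΩ hu hu'eps
            (lt_of_le_of_lt hzG hGξ) hKm hKu
      have hsucc_eps : Order.succ m < epsOmega Ω := (eps_isLimit hΩ).succ_lt hmeps
      have hKm1 : KB Ω ξ (Order.succ m) := by
        have hlt : Order.succ m < γ₀ := by
          have h1 : Order.succ m < Ω ^ Order.succ m := lt_opow_self_of_lt_eps hΩ hsucc_eps
          have h2 : Ω ^ Order.succ m ≤ δ := by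
            rw [hδ']
            exact le_trans (le_mul_left _ hP0) (le_self_add)
          exact lt_of_lt_of_le (lt_of_lt_of_le h1 h2) hδγ
        exact IHB _ hlt m 1 (add_one_eq_succ m) hmeps (one_lt_eps hΩ) hKm (KB_one hΩ hξ1)
      exact IHG P hPG (Order.succ m) (Ω ^ m * z + u) δ hδ' hδγ hu'lt hP0
        (lt_of_le_of_lt hPleG hGξ) (lt_of_lt_of_le hPω (le_mul_right ω hΩ0)) hsucc_eps
        hKm1 hKu'

end lemA

section stepA

theorem StepA {Ω ξ γ₀ : Ordinal} (hΩ : 1 < Ω) (hξ1 : 1 < ξ)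
    (hadd : ∀ a < ξ, ∀ b < ξ, a + b < ξ) (hγ₀ : γ₀ < epsOmega Ω)
    (IHB : ∀ τ < γ₀, ∀ a b : Ordinal, a + b = τ → a < epsOmega Ω → b < epsOmega Ω →
      KB Ω ξ a → KB Ω ξ b → KB Ω ξ τ)
    {x y : Ordinal} (hxy : x + y = γ₀) (hx0 : x ≠ 0)
    (hy : y < Ω ^ Order.succ (log Ω x)) (hxeps : x < epsOmega Ω) (hyeps : y < epsOmega Ω)
    (hKx : KB Ω ξ x) (hKy : KB Ω ξ y)
    (hne : x % Ω ^ log Ω x + y ≠ γ₀) : KB Ω ξ γ₀ := by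
  have hΩ0 : (0:Ordinal) < Ω := lt_trans zero_lt_one hΩ
  set e := log Ω x with he
  set b := Ω ^ e with hb
  have hb0 : b ≠ 0 := (opow_pos e hΩ0).ne'
  set c := x / b with hc
  set r := x % b with hr
  obtain ⟨hcξ, hKe, hKr⟩ := (KB_iff hΩ hx0 hxeps).mp hKx
  have hc0 : 0 < c := (Ordinal.div_pos hb0).mpr (opow_log_le_self Ω hx0)
  have hcΩ : c < Ω := Ordinal.div_opow_log_lt x hΩ
  have hγid : γ₀ = b * c + (r + y) := by
    rw [← hxy, ← add_assoc, Ordinal.div_add_mod]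
  have hsle : r + y ≤ γ₀ := hγid ▸ le_add_self
  have hslt : r + y < γ₀ := hsle.lt_of_ne hne
  have hreps : r < epsOmega Ω := lt_of_le_of_lt (Ordinal.mod_le x b) hxeps
  have hKs : KB Ω ξ (r + y) := IHB _ hslt r y rfl hreps hyeps hKr hKy
  set q := (r + y) / b with hq'
  set w := (r + y) % b with hw'
  have hKw : KB Ω ξ w := KB_mod hΩ _ (lt_trans hslt hγ₀) hKs e
  have hw : w < b := Ordinal.mod_lt _ hb0
  set yd := y / b with hyd
  have hydΩ : yd < Ω := by
    rw [hyd]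
    refine (Ordinal.div_lt hb0).mpr ?_
    rw [hb, ← opow_succ]
    exact hy
  have hydξ : yd < ξ := by
    rcases lt_or_ge y b with hyb | hby
    · have h0 : yd = 0 := by
        have h1 : yd < 1 := (Ordinal.div_lt hb0).mpr (by rwa [mul_one])
        exact Ordinal.lt_one_iff_zero.mp h1
      rw [h0]
      exact lt_trans zero_lt_one hξ1
    · have hy0 : y ≠ 0 := (lt_of_lt_of_le (opow_pos e hΩ0) hby).ne'
      have hlogy : log Ω y = e := by
        refine le_antisymm ?_ ?_
        · exact Order.lt_succ_iff.mp ((lt_opow_iff_log_lt hΩ hy0).mp hy)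
        · exact (opow_le_iff_le_log hΩ hy0).mp hby
      obtain ⟨hyc, _, _⟩ := (KB_iff hΩ hy0 hyeps).mp hKy
      rw [hlogy] at hyc
      exact hyc
  have hqlt : q < 1 + (yd + 1) := by
    refine (Ordinal.div_lt hb0).mpr ?_
    have hymul : y < b * (yd + 1) := by
      have h0 := Ordinal.lt_mul_succ_div y hb0
      rwa [← add_one_eq_succ] at h0
    calc r + y < r + b * (yd + 1) := add_lt_add_right hymul r
      _ ≤ b + b * (yd + 1) := add_le_add_left (le_of_lt (Ordinal.mod_lt x hb0)) _
      _ = b * (1 + (yd + 1)) := by rw [mul_add b 1 (yd + 1), mul_one]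
  have hqle : q ≤ 1 + yd := by
    have h1 : (1 : Ordinal) + (yd + 1) = Order.succ (1 + yd) := by
      rw [← add_assoc, add_one_eq_succ]
    rw [h1] at hqlt
    exact Order.lt_succ_iff.mp hqlt
  have hqξ : q < ξ := lt_of_le_of_lt hqle (hadd 1 hξ1 yd hydξ)
  have hG0 : 0 < c + q := lt_of_lt_of_le hc0 (le_self_add)
  have hGξ : c + q < ξ := hadd c hcξ q hqξ
  have hGΩω : c + q < Ω * ω := by
    have h1 : q < 1 + Ω := lt_of_le_of_lt hqle (add_lt_add_right hydΩ 1)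
    have h2 : c + q < c + (1 + Ω) := add_lt_add_right h1 c
    have h3 : c + (1 + Ω) ≤ Ω + (Ω + Ω) :=
      add_le_add hcΩ.le (add_le_add_left hΩ.le Ω)
    have h4 : Ω + (Ω + Ω) = Ω * 3 := by
      rw [(by norm_num : (3:Ordinal) = 1 + 1 + 1), mul_add, mul_add, mul_one, add_assoc]
    have h5 : Ω * 3 ≤ Ω * ω := mul_le_mul_right (le_of_lt (nat_lt_omega0 3)) Ω
    calc c + q < c + (1 + Ω) := h2
      _ ≤ Ω + (Ω + Ω) := h3
      _ = Ω * 3 := h4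
      _ ≤ Ω * ω := h5
  have hfin : γ₀ = b * (c + q) + w := by
    calc γ₀ = b * c + (r + y) := hγid
      _ = b * c + (b * q + w) := by rw [Ordinal.div_add_mod]
      _ = b * c + b * q + w := by rw [add_assoc]
      _ = b * (c + q) + w := by rw [mul_add]
  exact LemA hΩ hξ1 hadd hγ₀ IHB (c + q) e w γ₀ hfin (le_refl γ₀) hw hG0 hGξ hGΩω
    (lt_of_le_of_lt (log_le_self Ω x) hxeps) hKe hKw

end stepA

section atom

theorem Atom {Ω ξ γ₀ : Ordinal} (hΩ : 1 < Ω) (hξ1 : 1 < ξ)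
    (hadd : ∀ a < ξ, ∀ b < ξ, a + b < ξ) (hΩω : ω ≤ Ω) (hγ₀ : γ₀ < epsOmega Ω)
    {e f c D : Ordinal}
    (hγ : γ₀ = Ω ^ e * c + Ω ^ f * D) (hef : e < f) (hc0 : 0 < c) (hcΩ : c < Ω)
    (hcξ : c < ξ) (hD0 : 0 < D) (hDΩ : D ≤ Ω) (hDξ : D < ξ)
    (heeps : e < epsOmega Ω) (hfeps : f < epsOmega Ω)
    (hKe : KB Ω ξ e) (hKf : KB Ω ξ f)
    (IHB : ∀ τ < γ₀, ∀ a b : Ordinal, a + b = τ → a < epsOmega Ω → b < epsOmega Ω →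
      KB Ω ξ a → KB Ω ξ b → KB Ω ξ τ) : KB Ω ξ γ₀ := by
  have hΩ0 : (0:Ordinal) < Ω := lt_trans zero_lt_one hΩ
  set x := Ω ^ e * c with hx'
  set Y := Ω ^ f * D with hY'
  have hx0 : 0 < x := lt_of_lt_of_le (opow_pos e hΩ0) (le_mul_left _ hc0)
  have hY0 : 0 < Y := lt_of_lt_of_le (opow_pos f hΩ0) (le_mul_left _ hD0)
  have hYf : Ω ^ f ≤ Y := le_mul_left _ hD0
  have hxf : x < Ω ^ f := by
    calc x < Ω ^ e * Ω := mul_lt_mul_of_pos_left hcΩ (opow_pos e hΩ0)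
      _ = Ω ^ Order.succ e := (opow_succ Ω e).symm
      _ ≤ Ω ^ f := opow_le_opow_right hΩ0 (Order.succ_le_iff.mpr hef)
  have hΩωlt : Ω < Ω * ω := by
    have h1 : Ω * 1 < Ω * ω := mul_lt_mul_of_pos_left one_lt_omega0 hΩ0
    rwa [mul_one] at h1
  set g := log ω Y with hg'
  set k := x / ω ^ g with hk'
  have hωg0 : (ω:Ordinal) ^ g ≠ 0 := (opow_pos g omega0_pos).ne'
  by_cases hk : k = 0
  · -- absorbed
    have hxg : x < ω ^ g := by
      by_contra h1
      push_neg at h1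
      have h2 : 0 < k := (Ordinal.div_pos hωg0).mpr h1
      rw [hk] at h2
      exact lt_irrefl 0 h2
    have habs : γ₀ = Y := by
      rw [hγ]
      exact add_absorp hxg (opow_log_le_self ω hY0.ne')
    refine LemA hΩ hξ1 hadd hγ₀ IHB D f 0 γ₀ (by rw [habs, hY', add_zero]) (le_refl γ₀)
      (opow_pos f hΩ0) hD0 hDξ (lt_of_le_of_lt hDΩ hΩωlt) hfeps hKf (KB_zero Ω ξ)
  · have hk0 : 0 < k := pos_iff_ne_zero.mpr hk
    have hgx : ω ^ g ≤ x := (Ordinal.div_pos hωg0).mp hk0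
    have hΩf0 : (Ω:Ordinal) ^ f ≠ 0 := (opow_pos f hΩ0).ne'
    -- D < ω
    have hDω : D < ω := by
      by_contra hge
      push_neg at hge
      have h1 : Ω ^ f * ω ≤ Y := mul_le_mul_right hge _
      have h2 : ω ^ Order.succ (log ω (Ω ^ f)) ≤ Ω ^ f * ω := by
        rw [opow_succ]
        exact mul_le_mul_left (opow_log_le_self ω hΩf0) ω
      have h3 : Order.succ (log ω (Ω ^ f)) ≤ g :=
        (opow_le_iff_le_log one_lt_omega0 hY0.ne').mp (le_trans h2 h1)
      have h4 : x < ω ^ g := by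
        calc x < Ω ^ f := hxf
          _ < ω ^ Order.succ (log ω (Ω ^ f)) := lt_opow_succ_log_self one_lt_omega0 _
          _ ≤ ω ^ g := opow_le_opow_right omega0_pos h3
      exact absurd hgx (not_le.mpr h4)
    obtain ⟨Dn, hDn⟩ := lt_omega0.mp hDω
    have hDn0 : 0 < Dn := by
      have h0 : (0:Ordinal) < (Dn:Ordinal) := hDn ▸ hD0
      exact_mod_cast h0
    set g0 := log ω (Ω ^ f) with hg0'
    set h0 := Ω ^ f / ω ^ g0 with hh0'
    set W := Ω ^ f % ω ^ g0 with hW'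
    have hωg00 : (ω:Ordinal) ^ g0 ≠ 0 := (opow_pos g0 omega0_pos).ne'
    have hfsplit : Ω ^ f = ω ^ g0 * h0 + W := (Ordinal.div_add_mod _ _).symm
    have hWlt : W < ω ^ g0 := Ordinal.mod_lt _ hωg00
    have hh00 : 0 < h0 := (Ordinal.div_pos hωg00).mpr (opow_log_le_self ω hΩf0)
    have hh0ω : h0 < ω := Ordinal.div_opow_log_lt _ one_lt_omega0
    obtain ⟨hn, hhn⟩ := lt_omega0.mp hh0ω
    have hhn0 : 0 < hn := by
      have h0 : (0:Ordinal) < (hn:Ordinal) := hhn ▸ hh00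
      exact_mod_cast h0
    have hYdec : Y = ω ^ g0 * (h0 * (Dn:Ordinal)) + W := by
      rw [hY', hDn]
      exact mul_nat_decomp hfsplit hWlt hh00 Dn hDn0
    have hgg0 : g = g0 := by
      refine le_antisymm ?_ (log_mono_right ω hYf)
      have hh0Dn : h0 * (Dn:Ordinal) + 1 ≤ ω := by
        have h1 : h0 * (Dn:Ordinal) < ω := by
          rw [hhn]
          exact_mod_cast nat_lt_omega0 (hn * Dn)
        rw [add_one_eq_succ]
        exact Order.succ_le_iff.mpr h1
      have hYlt : Y < ω ^ Order.succ g0 := by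
        rw [hYdec]
        calc ω ^ g0 * (h0 * (Dn:Ordinal)) + W
            < ω ^ g0 * (h0 * (Dn:Ordinal)) + ω ^ g0 := add_lt_add_right hWlt _
          _ = ω ^ g0 * (h0 * (Dn:Ordinal) + 1) := by rw [mul_add, mul_one]
          _ ≤ ω ^ g0 * ω := mul_le_mul_right hh0Dn _
          _ = ω ^ Order.succ g0 := (opow_succ _ _).symm
      exact Order.lt_succ_iff.mp ((lt_opow_iff_log_lt one_lt_omega0 hY0.ne').mp hYlt)
    have hkω : k < ω := by
      refine (Ordinal.div_lt hωg0).mpr ?_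
      calc x < Ω ^ f := hxf
        _ < ω ^ Order.succ g0 := lt_opow_succ_log_self one_lt_omega0 _
        _ = ω ^ g0 * ω := opow_succ _ _
        _ = ω ^ g * ω := by rw [hgg0]
    obtain ⟨κ, hκ⟩ := lt_omega0.mp hkω
    have hκ0 : 0 < κ := by
      have h0 : (0:Ordinal) < (κ:Ordinal) := hκ ▸ hk0
      exact_mod_cast h0
    have hxsplit : x = ω ^ g * k + x % ω ^ g := (Ordinal.div_add_mod _ _).symm
    have hxmodlt : x % ω ^ g < ω ^ g := Ordinal.mod_lt _ hωg0
    have habs2 : x % ω ^ g + Y = Y := add_absorp hxmodlt (opow_log_le_self ω hY0.ne')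
    set N : ℕ := κ + hn * Dn with hN'
    have hγN : γ₀ = ω ^ g0 * (N : Ordinal) + W := by
      calc γ₀ = x + Y := hγ
        _ = ω ^ g * k + (x % ω ^ g + Y) := by rw [← add_assoc, ← hxsplit]
        _ = ω ^ g * k + Y := by rw [habs2]
        _ = ω ^ g0 * (κ:Ordinal) + (ω ^ g0 * (h0 * (Dn:Ordinal)) + W) := by
            rw [hgg0, hκ, hYdec]
        _ = ω ^ g0 * ((κ:Ordinal) + h0 * (Dn:Ordinal)) + W := by
            rw [mul_add, add_assoc]
        _ = ω ^ g0 * (N:Ordinal) + W := by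
            congr 2
            rw [hhn, hN']
            push_cast
            ring
    set m0 : ℕ := N / hn with hm0'
    set i0 : ℕ := N % hn with hi0'
    have hNsplit : hn * m0 + i0 = N := Nat.div_add_mod N hn
    have hm01 : 0 < m0 := by
      have hle : hn ≤ N := by
        have : hn * 1 ≤ hn * Dn := Nat.mul_le_mul_left hn hDn0
        omega
      exact Nat.div_pos hle hhn0
    have hi0hn : i0 < hn := Nat.mod_lt _ hhn0
    have hYm : Ω ^ f * (m0:Ordinal) = ω ^ g0 * (h0 * (m0:Ordinal)) + W :=
      mul_nat_decomp hfsplit hWlt hh00 m0 hm01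
    by_cases hi0z : i0 = 0
    · -- exact multiple
      have hγm : γ₀ = Ω ^ f * (m0 : Ordinal) := by
        rw [hγN, hYm]
        congr 2
        rw [hhn]
        have : N = hn * m0 := by omega
        rw [this]
        push_cast
        ring
      refine LemA hΩ hξ1 hadd hγ₀ IHB (m0:Ordinal) f 0 γ₀ (by rw [hγm, add_zero])
        (le_refl γ₀) (opow_pos f hΩ0) (by exact_mod_cast hm01) (nat_lt_xi hξ1 hadd m0)
        (lt_of_lt_of_le (nat_lt_omega0 m0) (le_mul_right ω hΩ0)) hfeps hKf (KB_zero Ω ξ)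
    · have hi01 : 0 < i0 := Nat.pos_of_ne_zero hi0z
      have hi0pos : (0:Ordinal) < (i0:Ordinal) := by exact_mod_cast hi01
      have hhn2 : 2 ≤ hn := by omega
      -- f = succ e
      have hfx : Ω ^ f ≤ x * ω := by
        calc Ω ^ f ≤ ω ^ Order.succ g0 := (lt_opow_succ_log_self one_lt_omega0 _).le
          _ = ω ^ g0 * ω := opow_succ _ _
          _ ≤ x * ω := mul_le_mul_left (hgg0 ▸ hgx) ω
      have hfe : f = Order.succ e := by
        by_contra hne
        have h2 : Order.succ (Order.succ e) ≤ f :=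
          Order.succ_le_iff.mpr ((Order.succ_le_iff.mpr hef).lt_of_ne (Ne.symm hne))
        have h3 : Ω ^ e * (Ω * Ω) ≤ Ω ^ e * (c * ω) := by
          calc Ω ^ e * (Ω * Ω) = Ω ^ Order.succ (Order.succ e) := by
                rw [opow_succ, opow_succ, mul_assoc]
            _ ≤ Ω ^ f := opow_le_opow_right hΩ0 h2
            _ ≤ x * ω := hfx
            _ = Ω ^ e * (c * ω) := by rw [hx', mul_assoc]
        have h4 : Ω * Ω ≤ c * ω := by
          by_contra h5
          push_neg at h5
          exact absurd h3 (not_le.mpr (mul_lt_mul_of_pos_left h5 (opow_pos e hΩ0)))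
        have h6 : c * ω ≤ Ω * ω := mul_le_mul_left hcΩ.le ω
        have h7 : Ω * ω ≤ Ω * Ω := mul_le_mul_right hΩω Ω
        have h8 : Ω * ω = Ω * Ω := le_antisymm h7 (le_trans h4 h6)
        have h9 : ω = Ω := by
          by_contra h10
          have h11 : ω < Ω := lt_of_le_of_ne hΩω h10
          exact absurd h8 (ne_of_lt (mul_lt_mul_of_pos_left h11 hΩ0))
        have h12 : g0 = f := by rw [hg0', ← h9, log_opow one_lt_omega0]
        have h13 : h0 = 1 := by
          rw [hh0', h12, ← h9, Ordinal.div_self (opow_pos f omega0_pos).ne']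
        have h14 : hn = 1 := by
          have h15 : ((hn:ℕ):Ordinal) = ((1:ℕ):Ordinal) := by
            rw [← hhn, h13]
            norm_num
          exact_mod_cast h15
        omega
      -- Ω decomposition
      set GΩ := log ω Ω with hGΩ'
      set H := Ω / ω ^ GΩ with hH'
      set WΩ := Ω % ω ^ GΩ with hWΩ'
      have hωGΩ0 : (ω:Ordinal) ^ GΩ ≠ 0 := (opow_pos GΩ omega0_pos).ne'
      have hΩsplit : Ω = ω ^ GΩ * H + WΩ := (Ordinal.div_add_mod _ _).symm
      have hWΩlt : WΩ < ω ^ GΩ := Ordinal.mod_lt _ hωGΩ0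
      have hH0 : 0 < H := (Ordinal.div_pos hωGΩ0).mpr (opow_log_le_self ω hΩ0.ne')
      have hHω : H < ω := Ordinal.div_opow_log_lt _ one_lt_omega0
      have hGΩ1 : (1:Ordinal) ≤ GΩ := by
        have h1 : ω ^ (1:Ordinal) ≤ Ω := by rwa [opow_one]
        exact (opow_le_iff_le_log one_lt_omega0 hΩ0.ne').mp h1
      set u_e := log ω (Ω ^ e) with hu_e'
      have hpure : Ω ^ e * ω ^ GΩ = ω ^ (u_e + GΩ) :=
        mul_omega0_opow_eq (opow_pos e hΩ0) (lt_of_lt_of_le zero_lt_one hGΩ1)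
      have hdecf : Ω ^ f = ω ^ (u_e + GΩ) * H + Ω ^ e * WΩ := by
        calc Ω ^ f = Ω ^ e * Ω := by rw [hfe, opow_succ]
          _ = Ω ^ e * (ω ^ GΩ * H + WΩ) := by rw [← hΩsplit]
          _ = Ω ^ e * (ω ^ GΩ * H) + Ω ^ e * WΩ := by rw [mul_add]
          _ = ω ^ (u_e + GΩ) * H + Ω ^ e * WΩ := by rw [← mul_assoc, hpure]
      have hWsmall : Ω ^ e * WΩ < ω ^ (u_e + GΩ) := by
        rw [← hpure]
        exact mul_lt_mul_of_pos_left hWΩlt (opow_pos e hΩ0)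
      obtain ⟨hlg, hld, hlm⟩ := logdiv one_lt_omega0 hH0 hHω hWsmall
      have hg0eq : g0 = u_e + GΩ := by
        rw [hg0']
        conv_lhs => rw [hdecf]
        exact hlg
      have hh0eq : h0 = H := by
        rw [hh0', hg0eq]
        conv_lhs => rw [hdecf]
        exact hld
      have hWeq : W = Ω ^ e * WΩ := by
        rw [hW', hg0eq]
        conv_lhs => rw [hdecf]
        exact hlm
      have hGc : ω ^ GΩ ≤ c := by
        by_contra h1
        push_neg at h1
        have h2 : x < ω ^ g0 := by
          calc x < Ω ^ e * ω ^ GΩ := mul_lt_mul_of_pos_left h1 (opow_pos e hΩ0)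
            _ = ω ^ (u_e + GΩ) := hpure
            _ = ω ^ g0 := by rw [hg0eq]
        exact absurd (hgg0 ▸ hgx) (not_le.mpr h2)
      set cρ := ω ^ GΩ * (i0 : Ordinal) + WΩ with hcρ'
      have hRω : Ω ^ e * cρ = ω ^ g0 * (i0 : Ordinal) + W := by
        calc Ω ^ e * cρ = Ω ^ e * (ω ^ GΩ * (i0:Ordinal)) + Ω ^ e * WΩ := by
              rw [hcρ', mul_add]
          _ = ω ^ (u_e + GΩ) * (i0:Ordinal) + Ω ^ e * WΩ := by rw [← mul_assoc, hpure]
          _ = ω ^ g0 * (i0:Ordinal) + W := by rw [hg0eq, hWeq]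
      have hfm : γ₀ = Ω ^ f * (m0 : Ordinal) + Ω ^ e * cρ := by
        have hstep : Ω ^ f * (m0 : Ordinal) + Ω ^ e * cρ = ω ^ g0 * (N:Ordinal) + W := by
          calc Ω ^ f * (m0 : Ordinal) + Ω ^ e * cρ
              = ω ^ g0 * (h0 * (m0:Ordinal)) + W + (ω ^ g0 * (i0:Ordinal) + W) := by
                rw [hYm, hRω]
            _ = ω ^ g0 * (h0 * (m0:Ordinal)) + (W + ω ^ g0 * (i0:Ordinal)) + W := by
                rw [add_assoc, add_assoc, add_assoc]
            _ = ω ^ g0 * (h0 * (m0:Ordinal)) + ω ^ g0 * (i0:Ordinal) + W := by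
                rw [add_absorp hWlt (le_mul_left _ hi0pos)]
            _ = ω ^ g0 * (h0 * (m0:Ordinal) + (i0:Ordinal)) + W := by rw [mul_add]
            _ = ω ^ g0 * (N:Ordinal) + W := by
                congr 2
                rw [hhn]
                have : hn * m0 + i0 = N := hNsplit
                push_cast [← this]
                ring
        rw [hγN, ← hstep]
      have hi0succ : (i0:Ordinal) + 1 ≤ h0 := by
        rw [hhn]
        have h1 : ((i0 + 1 : ℕ):Ordinal) ≤ ((hn:ℕ):Ordinal) := by
          exact_mod_cast Nat.succ_le_of_lt hi0hn
        calc (i0:Ordinal) + 1 = ((i0 + 1 : ℕ):Ordinal) := by push_cast; ring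
          _ ≤ (hn:Ordinal) := h1
      have hcρ2 : cρ < ω ^ GΩ * ((i0:Ordinal) + 1) := by
        calc cρ < ω ^ GΩ * (i0:Ordinal) + ω ^ GΩ := add_lt_add_right hWΩlt _
          _ = ω ^ GΩ * ((i0:Ordinal) + 1) := by rw [mul_add, mul_one]
      have hcρΩ : cρ < Ω := by
        calc cρ < ω ^ GΩ * ((i0:Ordinal) + 1) := hcρ2
          _ ≤ ω ^ GΩ * H := mul_le_mul_right (hh0eq ▸ hi0succ) _
          _ ≤ Ω := Ordinal.mul_div_le Ω _
      have hcρξ : cρ < ξ := by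
        calc cρ < ω ^ GΩ * ((i0:Ordinal) + 1) := hcρ2
          _ ≤ c * ((i0:Ordinal) + 1) := mul_le_mul_left hGc _
          _ = c * (((i0 + 1:ℕ)):Ordinal) := by push_cast; ring
          _ < ξ := mul_nat_lt_xi hξ1 hadd hcξ (i0 + 1)
      have hcρ0 : 0 < cρ := by
        calc (0:Ordinal) < ω ^ GΩ := opow_pos GΩ omega0_pos
          _ ≤ ω ^ GΩ * (i0:Ordinal) := le_mul_left _ hi0pos
          _ ≤ cρ := le_self_add
      have hRlt : Ω ^ e * cρ < Ω ^ f := by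
        rw [hRω]
        calc ω ^ g0 * (i0:Ordinal) + W < ω ^ g0 * (i0:Ordinal) + ω ^ g0 :=
              add_lt_add_right hWlt _
          _ = ω ^ g0 * ((i0:Ordinal) + 1) := by rw [mul_add, mul_one]
          _ ≤ ω ^ g0 * h0 := mul_le_mul_right hi0succ _
          _ ≤ Ω ^ f := Ordinal.mul_div_le _ _
      have hm0pos : (0:Ordinal) < (m0:Ordinal) := by exact_mod_cast hm01
      have hm0Ω : (m0:Ordinal) < Ω := lt_of_lt_of_le (nat_lt_omega0 m0) hΩω
      have hγeps' : Ω ^ f * (m0:Ordinal) + Ω ^ e * cρ < epsOmega Ω := hfm ▸ hγ₀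
      have hKR : KB Ω ξ (Ω ^ e * cρ) := by
        have hre : Ω ^ e * cρ + 0 < epsOmega Ω := by
          rw [add_zero]
          calc Ω ^ e * cρ < Ω ^ f := hRlt
            _ ≤ Ω ^ f * (m0:Ordinal) := le_mul_left _ hm0pos
            _ ≤ γ₀ := hfm ▸ le_self_add
            _ < epsOmega Ω := hγ₀
        have h1 := KB_single hΩ hcρ0 hcρΩ (opow_pos e hΩ0) hre hcρξ hKe (KB_zero Ω ξ)
        rwa [add_zero] at h1
      rw [hfm]
      exact KB_single hΩ hm0pos hm0Ω hRlt hγeps' (nat_lt_xi hξ1 hadd m0) hKf hKR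

end atom

section main

theorem MainB {Ω ξ : Ordinal} (hΩ : 1 < Ω) (hξ1 : 1 < ξ)
    (hadd : ∀ a < ξ, ∀ b < ξ, a + b < ξ) :
    ∀ γ, γ < epsOmega Ω → ∀ x y : Ordinal, x + y = γ → x < epsOmega Ω → y < epsOmega Ω →
      KB Ω ξ x → KB Ω ξ y → KB Ω ξ γ := by
  intro γ
  induction γ using Ordinal.induction with
  | _ γ IHB =>
  intro hγeps
  by_cases hsmall : γ < ω
  · intro x y _ _ _ _ _ χ hχ
    have h1 : χ ≤ γ := K_le hΩ γ hγeps χ hχ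
    exact lt_of_lt_of_le (lt_of_le_of_lt h1 hsmall) (omega0_le_xi hξ1 hadd)
  push_neg at hsmall
  replace IHB : ∀ τ < γ, ∀ a b : Ordinal, a + b = τ → a < epsOmega Ω → b < epsOmega Ω →
      KB Ω ξ a → KB Ω ξ b → KB Ω ξ τ :=
    fun τ hτ => IHB τ hτ (lt_trans hτ hγeps)
  have hΩ0 : (0:Ordinal) < Ω := lt_trans zero_lt_one hΩ
  have hΩω : ω ≤ Ω := by
    by_contra h1
    push_neg at h1
    have h2 : epsOmega Ω ≤ ω := csInf_le' (opow_omega0 hΩ h1)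
    exact absurd (lt_of_lt_of_le hγeps h2) (not_lt.mpr hsmall)
  have hΩωlt : Ω < Ω * ω := by
    have h1 : Ω * 1 < Ω * ω := mul_lt_mul_of_pos_left one_lt_omega0 hΩ0
    rwa [mul_one] at h1
  intro x
  induction x using Ordinal.induction with
  | _ x IHx =>
  intro y hxy hxeps hyeps hKx hKy
  rcases eq_or_ne x 0 with rfl | hx0
  · rw [zero_add] at hxy
    exact hxy ▸ hKy
  rcases eq_or_ne y 0 with rfl | hy0
  · rw [add_zero] at hxy
    exact hxy ▸ hKx
  set e := log Ω x with he'
  by_cases hycase : y < Ω ^ Order.succ e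
  · -- Case 1 : the head of x survives
    by_cases hs : x % Ω ^ e + y = γ
    · rcases eq_or_ne (x % Ω ^ e) 0 with hr0 | hr0
      · rw [hr0, zero_add] at hs
        exact hs ▸ hKy
      · obtain ⟨_, _, hKr⟩ := (KB_iff hΩ hx0 hxeps).mp hKx
        exact IHx (x % Ω ^ e) (mod_opow_log_lt_self Ω hx0) y hs
          (lt_trans (mod_opow_log_lt_self Ω hx0) hxeps) hyeps hKr hKy
    · exact StepA hΩ hξ1 hadd hγeps IHB hxy hx0 hycase hxeps hyeps hKx hKy hs
  · push_neg at hycase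
    have hef : Order.succ e ≤ log Ω y := (opow_le_iff_le_log hΩ hy0).mp hycase
    set f := log Ω y with hf'
    have heflt : e < f := lt_of_lt_of_le (Order.lt_succ e) hef
    have hxf : x < Ω ^ f :=
      lt_of_lt_of_le (lt_opow_succ_log_self hΩ x) (opow_le_opow_right hΩ0 hef)
    set d := y / Ω ^ f with hd'
    set t := y % Ω ^ f with ht'
    obtain ⟨hdξ, hKf, hKt⟩ := (KB_iff hΩ hy0 hyeps).mp hKy
    have hd0 : 0 < d := Ordinal.div_opow_log_pos Ω hy0
    have hdΩ : d < Ω := Ordinal.div_opow_log_lt y hΩ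
    have hysplit : y = Ω ^ f * d + t := (Ordinal.div_add_mod _ _).symm
    have hΩf0 : (Ω:Ordinal) ^ f ≠ 0 := (opow_pos f hΩ0).ne'
    have hfeps : f < epsOmega Ω := lt_of_le_of_lt (log_le_self Ω y) hyeps
    have heeps : e < epsOmega Ω := lt_of_le_of_lt (log_le_self Ω x) hxeps
    have hfdy : Ω ^ f * d ≤ y := Ordinal.mul_div_le y _
    have hΩfdle : Ω ^ f * d ≤ γ := by
      rw [← hxy]
      exact le_trans hfdy (le_add_self)
    have hKfd : KB Ω ξ (Ω ^ f * d) :=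
      LemA hΩ hξ1 hadd hγeps IHB d f 0 (Ω ^ f * d) (add_zero _).symm hΩfdle
        (opow_pos f hΩ0) hd0 hdξ (lt_trans hdΩ hΩωlt) hfeps hKf (KB_zero Ω ξ)
    have hfdeps : Ω ^ f * d < epsOmega Ω := lt_of_le_of_lt hΩfdle hγeps
    by_cases ht0 : t = 0
    · -- t = 0 : γ = x + Ω ^ f * d
      have hγ2 : γ = x + Ω ^ f * d := by
        rw [← hxy]
        congr 1
        rw [hysplit, ht0, add_zero]
      set c := x / Ω ^ e with hc'
      set r := x % Ω ^ e with hr'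
      obtain ⟨hcξ, hKe, hKr⟩ := (KB_iff hΩ hx0 hxeps).mp hKx
      have hc0 : 0 < c := (Ordinal.div_pos (opow_pos e hΩ0).ne').mpr (opow_log_le_self Ω hx0)
      have hcΩ : c < Ω := Ordinal.div_opow_log_lt x hΩ
      have hγ3 : γ = Ω ^ e * c + (r + Ω ^ f * d) := by
        rw [hγ2]
        conv_lhs => rw [← Ordinal.div_add_mod x (Ω ^ e)]
        rw [add_assoc]
      by_cases hs4 : r + Ω ^ f * d = γ
      · rcases eq_or_ne r 0 with hr0 | hr0
        · rw [hr0, zero_add] at hs4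
          exact hs4 ▸ hKfd
        · exact IHx r (mod_opow_log_lt_self Ω hx0) (Ω ^ f * d) hs4
            (lt_trans (mod_opow_log_lt_self Ω hx0) hxeps) hfdeps hKr hKfd
      · have hs4le : r + Ω ^ f * d ≤ γ := hγ3 ▸ le_add_self
        have hs4lt : r + Ω ^ f * d < γ := hs4le.lt_of_ne hs4
        have hKs4 : KB Ω ξ (r + Ω ^ f * d) := IHB _ hs4lt r (Ω ^ f * d) rfl
          (lt_trans (mod_opow_log_lt_self Ω hx0) hxeps) hfdeps hKr hKfd
        set s4 := r + Ω ^ f * d with hs4'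
        set C4 := s4 / Ω ^ f with hC4'
        set R4 := s4 % Ω ^ f with hR4'
        have hfd_le_s4 : Ω ^ f * d ≤ s4 := le_add_self
        have hf_le_s4 : Ω ^ f ≤ s4 := le_trans (le_mul_left _ hd0) hfd_le_s4
        have hC41 : 0 < C4 := (Ordinal.div_pos hΩf0).mpr hf_le_s4
        have hrf : r < Ω ^ f := lt_of_lt_of_le (Ordinal.mod_lt _ (opow_pos e hΩ0).ne')
          (opow_le_opow_right hΩ0 heflt.le)
        have hs4b : s4 ≤ Ω ^ f * (1 + d) := by
          calc s4 ≤ Ω ^ f + Ω ^ f * d := add_le_add_left hrf.le _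
            _ = Ω ^ f * (1 + d) := by rw [mul_add (Ω ^ f) 1 d, mul_one]
        have hC4d : C4 ≤ 1 + d := by
          calc C4 ≤ Ω ^ f * (1 + d) / Ω ^ f := Ordinal.div_le_left hs4b _
            _ = 1 + d := Ordinal.mul_div_cancel _ hΩf0
        have hC4ξ : C4 < ξ := lt_of_le_of_lt hC4d (hadd 1 hξ1 d hdξ)
        have h1d : (1:Ordinal) + d ≤ Ω := by
          rcases lt_or_ge d ω with hdω | hdω
          · obtain ⟨n, hn⟩ := lt_omega0.mp hdω
            rw [hn]
            calc (1:Ordinal) + (n:Ordinal) = ((1 + n : ℕ):Ordinal) := by push_cast; ring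
              _ = ((n + 1 : ℕ):Ordinal) := by rw [Nat.add_comm]
              _ = (n:Ordinal) + 1 := by push_cast; ring
              _ = Order.succ (n:Ordinal) := add_one_eq_succ _
              _ ≤ Ω := Order.succ_le_iff.mpr (hn ▸ hdΩ)
          · rw [one_add_of_omega0_le hdω]
            exact hdΩ.le
        have hC4Ω : C4 ≤ Ω := le_trans hC4d h1d
        have hKR4 : KB Ω ξ R4 := KB_mod hΩ s4 (lt_trans hs4lt hγeps) hKs4 f
        have hR4f : R4 < Ω ^ f := Ordinal.mod_lt _ hΩf0
        have hγ4 : γ = Ω ^ e * c + (Ω ^ f * C4 + R4) := by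
          rw [hγ3]
          congr 1
          exact (Ordinal.div_add_mod s4 (Ω ^ f)).symm
        have hKc : KB Ω ξ (Ω ^ e * c) := by
          have hecx : Ω ^ e * c ≤ x := Ordinal.mul_div_le x _
          exact LemA hΩ hξ1 hadd hγeps IHB c e 0 (Ω ^ e * c) (add_zero _).symm
            (le_trans hecx (hxy ▸ le_self_add)) (opow_pos e hΩ0) hc0 hcξ
            (lt_trans hcΩ hΩωlt) heeps hKe (KB_zero Ω ξ)
        by_cases hR40 : R4 = 0
        · have hγ5 : γ = Ω ^ e * c + Ω ^ f * C4 := by rw [hγ4, hR40, add_zero]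
          exact Atom hΩ hξ1 hadd hΩω hγeps hγ5 heflt hc0 hcΩ hcξ hC41 hC4Ω hC4ξ
            heeps hfeps hKe hKf IHB
        · set z := Ω ^ e * c + Ω ^ f * C4 with hz'
          have hγ6 : γ = z + R4 := by rw [hγ4, hz', add_assoc]
          have hR4pos : 0 < R4 := pos_iff_ne_zero.mpr hR40
          have hzlt : z < γ := by
            rw [hγ6]
            exact lt_add_of_pos_right z hR4pos
          have hΩfC4z : Ω ^ f * C4 ≤ z := le_add_self
          have hKfC4 : KB Ω ξ (Ω ^ f * C4) :=
            LemA hΩ hξ1 hadd hγeps IHB C4 f 0 (Ω ^ f * C4) (add_zero _).symm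
              (le_trans hΩfC4z hzlt.le) (opow_pos f hΩ0) hC41 hC4ξ
              (lt_of_le_of_lt hC4Ω hΩωlt) hfeps hKf (KB_zero Ω ξ)
          have hKz : KB Ω ξ z := IHB _ hzlt (Ω ^ e * c) (Ω ^ f * C4) rfl
            (lt_of_le_of_lt (le_trans (Ordinal.mul_div_le x _) (hxy ▸ le_self_add)) hγeps)
            (lt_of_le_of_lt (le_trans hΩfC4z hzlt.le) hγeps) hKc hKfC4
          set v := z % Ω ^ f with hv'
          set Q := z / Ω ^ f with hQ'
          have hKv : KB Ω ξ v := KB_mod hΩ z (lt_trans hzlt hγeps) hKz f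
          have hQ1 : 0 < Q := (Ordinal.div_pos hΩf0).mpr (le_trans (le_mul_left _ hC41) hΩfC4z)
          have hγ7 : γ = Ω ^ f * Q + (v + R4) := by
            rw [hγ6]
            conv_lhs => rw [← Ordinal.div_add_mod z (Ω ^ f)]
            rw [add_assoc]
          have hvf : v < Ω ^ f := Ordinal.mod_lt _ hΩf0
          have hu02 : v + R4 < Ω ^ f * 2 := by
            calc v + R4 < v + Ω ^ f := add_lt_add_right hR4f v
              _ ≤ Ω ^ f + Ω ^ f := add_le_add_left hvf.le _
              _ = Ω ^ f * 2 := by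
                  rw [(by norm_num : (2:Ordinal) = 1 + 1), mul_add, mul_one]
          have hu0γ : v + R4 < γ := tail_lt hΩ hQ1 hu02 hγ7
          have hKu0 : KB Ω ξ (v + R4) := IHB _ hu0γ v R4 rfl
            (lt_of_le_of_lt (Ordinal.mod_le z _) (lt_trans hzlt hγeps))
            (lt_of_le_of_lt (Ordinal.mod_le s4 _) (lt_trans hs4lt hγeps)) hKv hKR4
          set ud := (v + R4) / Ω ^ f with hud'
          set u' := (v + R4) % Ω ^ f with hu''
          have hKu' : KB Ω ξ u' := KB_mod hΩ (v + R4) (lt_trans hu0γ hγeps) hKu0 f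
          have hudle : ud ≤ 1 := by
            have h1 : ud < 2 := (Ordinal.div_lt hΩf0).mpr hu02
            have h2 : (2:Ordinal) = Order.succ 1 := by
              rw [← add_one_eq_succ]
              norm_num
            rw [h2] at h1
            exact Order.lt_succ_iff.mp h1
          have hγ8 : γ = Ω ^ f * (Q + ud) + u' := by
            calc γ = Ω ^ f * Q + (v + R4) := hγ7
              _ = Ω ^ f * Q + (Ω ^ f * ud + u') := by rw [Ordinal.div_add_mod]
              _ = Ω ^ f * Q + Ω ^ f * ud + u' := by rw [add_assoc]
              _ = Ω ^ f * (Q + ud) + u' := by rw [mul_add]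
          have hQle : Q ≤ 1 + C4 := by
            have hzb : z ≤ Ω ^ f * (1 + C4) := by
              have hecf : Ω ^ e * c ≤ Ω ^ f :=
                le_of_lt (lt_of_le_of_lt (Ordinal.mul_div_le x _) hxf)
              calc z ≤ Ω ^ f + Ω ^ f * C4 := add_le_add_left hecf _
                _ = Ω ^ f * (1 + C4) := by rw [mul_add (Ω ^ f) 1 C4, mul_one]
            calc Q ≤ Ω ^ f * (1 + C4) / Ω ^ f := Ordinal.div_le_left hzb _
              _ = 1 + C4 := Ordinal.mul_div_cancel _ hΩf0
          have hG0 : 0 < Q + ud := lt_of_lt_of_le hQ1 (le_self_add)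
          have hGξ : Q + ud < ξ := by
            have h1 : Q + ud ≤ (1 + C4) + 1 := add_le_add hQle hudle
            exact lt_of_le_of_lt h1 (hadd _ (hadd 1 hξ1 C4 hC4ξ) 1 hξ1)
          have hGΩω : Q + ud < Ω * ω := by
            have h1 : Q + ud ≤ (1 + Ω) + 1 :=
              add_le_add (le_trans hQle (add_le_add_right hC4Ω 1)) hudle
            have h2 : (1 + Ω) + 1 < Ω + Ω + Ω := by
              have h3 : (1:Ordinal) + Ω ≤ Ω + Ω := add_le_add_left hΩ.le Ω
              have h4 : (1 + Ω) + 1 ≤ (Ω + Ω) + 1 := add_le_add_left h3 1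
              exact lt_of_le_of_lt h4 (add_lt_add_right hΩ (Ω + Ω))
            have h5 : Ω + Ω + Ω = Ω * 3 := by
              rw [(by norm_num : (3:Ordinal) = 1 + 1 + 1), mul_add, mul_add, mul_one]
            have h6 : Ω * 3 ≤ Ω * ω := mul_le_mul_right (le_of_lt (nat_lt_omega0 3)) Ω
            calc Q + ud ≤ (1 + Ω) + 1 := h1
              _ < Ω + Ω + Ω := h2
              _ = Ω * 3 := h5
              _ ≤ Ω * ω := h6
          exact LemA hΩ hξ1 hadd hγeps IHB (Q + ud) f u' γ hγ8 (le_refl γ)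
            (Ordinal.mod_lt _ hΩf0) hG0 hGξ hGΩω hfeps hKf hKu'
    · -- t ≠ 0
      have ht0' : 0 < t := pos_iff_ne_zero.mpr ht0
      set s0 := x + Ω ^ f * d with hs0'
      have hγ9 : γ = s0 + t := by rw [← hxy, hs0', hysplit, ← add_assoc]
      have hs0lt : s0 < γ := by
        rw [hγ9]
        exact lt_add_of_pos_right s0 ht0'
      have hKs0 : KB Ω ξ s0 := IHB _ hs0lt x (Ω ^ f * d) rfl hxeps hfdeps hKx hKfd
      have hfs0 : Ω ^ f ≤ s0 := le_trans (le_mul_left _ hd0) (le_add_self)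
      have hs00 : s0 ≠ 0 := (lt_of_lt_of_le (opow_pos f hΩ0) hfs0).ne'
      have hfL : f ≤ log Ω s0 := (opow_le_iff_le_log hΩ hs00).mp hfs0
      have htL : t < Ω ^ log Ω s0 :=
        lt_of_lt_of_le (Ordinal.mod_lt _ hΩf0) (opow_le_opow_right hΩ0 hfL)
      have htsucc : t < Ω ^ Order.succ (log Ω s0) :=
        lt_of_lt_of_le htL (opow_le_opow_right hΩ0 (Order.le_succ _))
      have hne : s0 % Ω ^ log Ω s0 + t ≠ γ := by
        rw [hγ9]
        exact neq_absorb hΩ hs00 htL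
      exact StepA hΩ hξ1 hadd hγeps IHB hγ9.symm hs00 htsucc (lt_trans hs0lt hγeps)
        (lt_of_le_of_lt (Ordinal.mod_le y _) hyeps) hKs0 hKt hne

end main

end S7

/-- If α, β < ε(Ω) and ξ is a nonzero additively indecomposable ordinal (i.e. closed under
ordinal addition), then K_Ω α < ξ and K_Ω β < ξ imply K_Ω (α + β) < ξ. -/
theorem stmt7 (Ω : Ordinal) (hΩ : 1 < Ω) (α β ξ : Ordinal)
    (hα : α < epsOmega Ω) (hβ : β < epsOmega Ω)
    (hξ0 : 0 < ξ) (hadd : ∀ a < ξ, ∀ b < ξ, a + b < ξ)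
    (hKα : ∀ x ∈ KOmega Ω α, x < ξ) (hKβ : ∀ x ∈ KOmega Ω β, x < ξ) :
    ∀ x ∈ KOmega Ω (α + β), x < ξ := by
  by_cases hξ1 : 1 < ξ
  · exact S7.MainB hΩ hξ1 hadd (α + β) (S7.eps_add_closed hΩ hα hβ) α β rfl hα hβ hKα hKβ
  · have hξeq : ξ = 1 := by
      refine le_antisymm (not_lt.mp hξ1) ?_
      have h0 := Order.add_one_le_iff.mpr hξ0
      rwa [zero_add] at h0
    have hz : ∀ δ, δ < epsOmega Ω → (∀ x ∈ KOmega Ω δ, x < ξ) → δ = 0 := by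
      intro δ hδ hK
      by_contra hδ0
      have hmem : δ / Ω ^ Ordinal.log Ω δ ∈ KOmega Ω δ :=
        (S7.mem_KOmega_iff hΩ hδ0 hδ).mpr (Or.inl rfl)
      have h1 := hK _ hmem
      rw [hξeq] at h1
      have h2 : δ / Ω ^ Ordinal.log Ω δ = 0 := Ordinal.lt_one_iff_zero.mp h1
      have h3 : 0 < δ / Ω ^ Ordinal.log Ω δ := Ordinal.div_opow_log_pos Ω hδ0
      rw [h2] at h3
      exact lt_irrefl 0 h3
    have hα0 : α = 0 := hz α hα hKα
    have hβ0 : β = 0 := hz β hβ hKβ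
    rw [hα0, hβ0, add_zero]
    intro x hx
    rw [S7.KOmega_zero] at hx
    exact absurd hx (Set.notMem_empty x)
end
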